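/- The function T(ω,s) = ∑_{k=1}^∞ s^k [ln s − 2H_{k-1} − H_k + ln ω + 3γ − ln 2] / ((k-1)!² k!) · (ω/2)^{k-1} satisfies the partial differential equation 2 ∂_ω (s ∂_s² T) = T for ω, s > 0, where ∂_s² denotes the second derivative in s. -/

import Mathlib

/-- The j-th harmonic number, `H_0 = 0`. -/
noncomputable def harmonicNumber (j : ℕ) : ℝ :=
  ∑ i ∈ Finset.range j, (1 : ℝ) / (i + 1)

/-- `T(ω,s) = ∑_{k=1}^∞ s^k [ln s − 2H_{k-1} − H_k + ln ω + 3γ − ln 2]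
      / ((k-1)!² k!) (ω/2)^{k-1}`. -/
noncomputable def Tfun (ω s : ℝ) : ℝ :=
  ∑' k : ℕ, s ^ (k + 1) *
    (Real.log s - 2 * harmonicNumber k - harmonicNumber (k + 1) + Real.log ω +
      3 * Real.eulerMascheroniConstant - Real.log 2) /
    (Nat.factorial k * Nat.factorial k * Nat.factorial (k + 1)) * (ω / 2) ^ k

/- ## Auxiliary definitions -/

noncomputable def Dk (k : ℕ) : ℝ :=
  (Nat.factorial k : ℝ) * (Nat.factorial k) * (Nat.factorial (k + 1))

noncomputable def Lf (w s : ℝ) (k : ℕ) : ℝ :=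
  Real.log s - 2 * harmonicNumber k - harmonicNumber (k + 1) + Real.log w +
    3 * Real.eulerMascheroniConstant - Real.log 2

/-- generic term shape -/
noncomputable def gterm (α β : ℕ → ℝ) (w y e : ℝ) (k : ℕ) : ℝ :=
  (α k * Lf w y k + β k) * (y ^ k / Dk k) * (w / 2) ^ k * e

noncomputable def term1 (w y : ℝ) : ℕ → ℝ :=
  gterm (fun k => (k : ℝ) + 1) (fun _ => 1) w y 1

noncomputable def term2 (w y : ℝ) : ℕ → ℝ :=
  gterm (fun k => (k : ℝ) * ((k : ℝ) + 1)) (fun k => 2 * (k : ℝ) + 1) w y y⁻¹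

noncomputable def stc (w y : ℝ) : ℕ → ℝ :=
  gterm (fun k => (k : ℝ) * ((k : ℝ) + 1)) (fun k => 2 * (k : ℝ) + 1) w y 1

noncomputable def termW (w y : ℝ) : ℕ → ℝ :=
  gterm (fun k => (k : ℝ) ^ 2 * ((k : ℝ) + 1))
    (fun k => (k : ℝ) * ((k : ℝ) + 1) + (k : ℝ) * (2 * (k : ℝ) + 1)) w y w⁻¹

/- ## Elementary bounds -/

lemma harmonicNumber_nonneg (j : ℕ) : 0 ≤ harmonicNumber j :=
  Finset.sum_nonneg fun i _ => by positivity

lemma harmonicNumber_le (j : ℕ) : harmonicNumber j ≤ j := by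
  have : harmonicNumber j ≤ ∑ _i ∈ Finset.range j, (1 : ℝ) := by
    apply Finset.sum_le_sum
    intro i _
    rw [div_le_one (by positivity)]
    have : (0:ℝ) ≤ (i:ℝ) := Nat.cast_nonneg i
    linarith
  simpa using this

lemma Dk_pos (k : ℕ) : 0 < Dk k := by
  unfold Dk; positivity

lemma Dk_ge (k : ℕ) : (Nat.factorial k : ℝ) ≤ Dk k := by
  have h1 : (1:ℝ) ≤ (Nat.factorial k : ℝ) := by
    exact_mod_cast Nat.one_le_iff_ne_zero.2 (Nat.factorial_ne_zero k)
  have h2 : (1:ℝ) ≤ (Nat.factorial (k+1) : ℝ) := by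
    exact_mod_cast Nat.one_le_iff_ne_zero.2 (Nat.factorial_ne_zero (k+1))
  unfold Dk; nlinarith

lemma Lf_bound (w y : ℝ) (k : ℕ) :
    |Lf w y k| ≤ |Real.log y| + |Real.log w| +
      (3 * |Real.eulerMascheroniConstant| + Real.log 2) + 3 * ((k : ℝ) + 1) := by
  have h1 := harmonicNumber_nonneg k
  have h2 := harmonicNumber_le k
  have h3 := harmonicNumber_nonneg (k+1)
  have h4 := harmonicNumber_le (k+1)
  have l1 := le_abs_self (Real.log y)
  have l2 := neg_abs_le (Real.log y)
  have l3 := le_abs_self (Real.log w)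
  have l4 := neg_abs_le (Real.log w)
  have l5 := le_abs_self Real.eulerMascheroniConstant
  have l6 := neg_abs_le Real.eulerMascheroniConstant
  have l7 : 0 ≤ Real.log 2 := Real.log_nonneg one_le_two
  have hc : ((k:ℕ):ℝ) = (k:ℝ) := rfl
  have hc2 : (((k+1):ℕ):ℝ) = (k:ℝ) + 1 := by push_cast; ring
  rw [abs_le]
  constructor <;> · unfold Lf; rw [hc2] at h4; nlinarith

lemma abs_log_interval {a b y : ℝ} (ha : 0 < a) (h1 : a ≤ y) (h2 : y ≤ b) :
    |Real.log y| ≤ |Real.log a| + |Real.log b| := by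
  have l1 : Real.log a ≤ Real.log y := Real.log_le_log ha h1
  have l2 : Real.log y ≤ Real.log b := Real.log_le_log (lt_of_lt_of_le ha h1) h2
  have l3 := neg_abs_le (Real.log a)
  have l4 := le_abs_self (Real.log b)
  have l5 := abs_nonneg (Real.log a)
  have l6 := abs_nonneg (Real.log b)
  rw [abs_le]; constructor <;> linarith

/- ## Summability -/

lemma summable_u (C : ℝ) {q : ℝ} (hq : 0 ≤ q) :
    Summable (fun k : ℕ => C * ((k : ℝ) + 2) ^ 4 * q ^ k / (Nat.factorial k : ℝ)) := by
  have h : Summable (fun k : ℕ => ((k : ℝ) + 2) ^ 4 * q ^ k / (Nat.factorial k : ℝ)) := by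
    apply Summable.of_nonneg_of_le (fun k => by positivity) (fun k => ?_)
      ((Real.summable_pow_div_factorial (16 * q)).mul_left 256)
    have hk : ((k : ℝ) + 2) ≤ 2 ^ (k + 2) := by
      have := (Nat.lt_two_pow_self (n := k + 2)).le
      exact_mod_cast this
    have hpow : ((k : ℝ) + 2) ^ 4 ≤ 256 * 16 ^ k := by
      calc ((k : ℝ) + 2) ^ 4 ≤ ((2:ℝ) ^ (k + 2)) ^ 4 := by
            apply pow_le_pow_left₀ (by positivity) hk
        _ = 256 * 16 ^ k := by
            rw [← pow_mul, show (k + 2) * 4 = 4 * k + 8 by ring, pow_add, pow_mul]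
            norm_num
            ring
    calc ((k : ℝ) + 2) ^ 4 * q ^ k / (Nat.factorial k : ℝ)
        ≤ (256 * 16 ^ k) * q ^ k / (Nat.factorial k : ℝ) := by
          gcongr
      _ = 256 * ((16 * q) ^ k / (Nat.factorial k : ℝ)) := by
          rw [mul_pow]; ring
  exact (h.mul_left C).congr fun k => by ring

lemma gterm_bound {α β : ℕ → ℝ} (k : ℕ)
    (hα : |α k| ≤ ((k : ℝ) + 2) ^ 3) (hβ : |β k| ≤ 3 * ((k : ℝ) + 2) ^ 3)
    {w y e M Y W E : ℝ} (hM : |Real.log y| + |Real.log w| ≤ M)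
    (hY : |y| ≤ Y) (hW : |w / 2| ≤ W) (hE : |e| ≤ E) :
    |gterm α β w y e k| ≤
      E * (M + (3 * |Real.eulerMascheroniConstant| + Real.log 2) + 6) *
        ((k : ℝ) + 2) ^ 4 * (Y * W) ^ k / (Nat.factorial k : ℝ) := by
  set c0 : ℝ := 3 * |Real.eulerMascheroniConstant| + Real.log 2 with hc0def
  have hc0 : 0 ≤ c0 := by
    have : (0:ℝ) ≤ Real.log 2 := Real.log_nonneg one_le_two
    have := abs_nonneg Real.eulerMascheroniConstant
    rw [hc0def]; linarith
  have hM0 : 0 ≤ M := le_trans (by positivity) hM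
  have hY0 : 0 ≤ Y := le_trans (abs_nonneg y) hY
  have hW0 : 0 ≤ W := le_trans (abs_nonneg _) hW
  have hE0 : 0 ≤ E := le_trans (abs_nonneg e) hE
  have hL : |Lf w y k| ≤ M + c0 + 3 * ((k : ℝ) + 1) := by
    refine (Lf_bound w y k).trans ?_
    rw [hc0def]; linarith
  have hA : |α k * Lf w y k + β k| ≤ ((k : ℝ) + 2) ^ 4 * (M + c0 + 6) := by
    have h1 : |α k * Lf w y k + β k| ≤ |α k| * |Lf w y k| + |β k| :=
      (abs_add_le _ _).trans (by rw [abs_mul])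
    have hk0 : (0:ℝ) ≤ (k : ℝ) := Nat.cast_nonneg k
    have habs : (0:ℝ) ≤ |Lf w y k| := abs_nonneg _
    have hp3 : (0:ℝ) ≤ ((k : ℝ) + 2) ^ 3 := by positivity
    have hmul : |α k| * |Lf w y k| ≤ ((k : ℝ) + 2) ^ 3 * (M + c0 + 3 * ((k : ℝ) + 1)) :=
      mul_le_mul hα hL habs hp3
    have hps : ((k : ℝ) + 2) ^ 4 = ((k : ℝ) + 2) ^ 3 * ((k : ℝ) + 2) := pow_succ _ 3
    nlinarith [mul_nonneg hp3 (mul_nonneg (by linarith : (0:ℝ) ≤ (k:ℝ)+1)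
      (by linarith : (0:ℝ) ≤ M + c0)), mul_nonneg hp3 hk0]
  have h2 : |y ^ k / Dk k| ≤ Y ^ k / (Nat.factorial k : ℝ) := by
    rw [abs_div, abs_pow, abs_of_pos (Dk_pos k)]
    exact div_le_div₀ (by positivity) (pow_le_pow_left₀ (abs_nonneg y) hY k)
      (by positivity) (Dk_ge k)
  have h3 : |(w / 2) ^ k| ≤ W ^ k := by
    rw [abs_pow]; exact pow_le_pow_left₀ (abs_nonneg _) hW k
  have hgoal : |gterm α β w y e k| =
      |α k * Lf w y k + β k| * |y ^ k / Dk k| * |(w / 2) ^ k| * |e| := by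
    unfold gterm; rw [abs_mul, abs_mul, abs_mul]
  rw [hgoal]
  calc |α k * Lf w y k + β k| * |y ^ k / Dk k| * |(w / 2) ^ k| * |e|
      ≤ (((k : ℝ) + 2) ^ 4 * (M + c0 + 6)) * (Y ^ k / (Nat.factorial k : ℝ)) * W ^ k * E := by
        apply mul_le_mul _ hE (abs_nonneg e) _
        · apply mul_le_mul _ h3 (abs_nonneg _) _
          · exact mul_le_mul hA h2 (abs_nonneg _) (by positivity)
          · have : (0:ℝ) ≤ ((k : ℝ) + 2) ^ 4 * (M + c0 + 6) := by positivity
            positivity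
        · positivity
    _ = E * (M + c0 + 6) * ((k : ℝ) + 2) ^ 4 * (Y * W) ^ k / (Nat.factorial k : ℝ) := by
        rw [mul_pow]; ring

lemma summable_gterm {α β : ℕ → ℝ} (hα : ∀ k, |α k| ≤ ((k : ℝ) + 2) ^ 3)
    (hβ : ∀ k, |β k| ≤ 3 * ((k : ℝ) + 2) ^ 3) (w y e : ℝ) :
    Summable (fun k => gterm α β w y e k) := by
  apply Summable.of_abs
  apply Summable.of_nonneg_of_le (fun k => abs_nonneg _)
    (fun k => gterm_bound k (hα k) (hβ k) (le_refl (|Real.log y| + |Real.log w|))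
      (le_refl |y|) (le_refl |w / 2|) (le_refl |e|))
    (summable_u _ (by positivity))

/- ## Derivatives of the individual terms -/

lemma hasDerivAt_Lf_s (w : ℝ) (k : ℕ) {y : ℝ} (hy : y ≠ 0) :
    HasDerivAt (fun z => Lf w z k) y⁻¹ y := by
  have h := (Real.hasDerivAt_log hy).add_const
    (-(2 * harmonicNumber k) - harmonicNumber (k + 1) + Real.log w +
      3 * Real.eulerMascheroniConstant - Real.log 2)
  have heq : (fun z => Lf w z k) = (fun z => Real.log z +
      (-(2 * harmonicNumber k) - harmonicNumber (k + 1) + Real.log w +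
        3 * Real.eulerMascheroniConstant - Real.log 2)) := by
    funext z; unfold Lf; ring
  rw [heq]; exact h

lemma hasDerivAt_Lf_w (s : ℝ) (k : ℕ) {y : ℝ} (hy : y ≠ 0) :
    HasDerivAt (fun z => Lf z s k) y⁻¹ y := by
  have h := (Real.hasDerivAt_log hy).add_const
    (Real.log s - 2 * harmonicNumber k - harmonicNumber (k + 1) +
      3 * Real.eulerMascheroniConstant - Real.log 2)
  have heq : (fun z => Lf z s k) = (fun z => Real.log z +
      (Real.log s - 2 * harmonicNumber k - harmonicNumber (k + 1) +
        3 * Real.eulerMascheroniConstant - Real.log 2)) := by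
    funext z; unfold Lf; ring
  rw [heq]; exact h

lemma hasDerivAt_term0 (w : ℝ) (k : ℕ) {y : ℝ} (hy : 0 < y) :
    HasDerivAt (fun z => z ^ (k + 1) * Lf w z k / Dk k * (w / 2) ^ k) (term1 w y k) y := by
  have hL := hasDerivAt_Lf_s w k hy.ne'
  have hp : HasDerivAt (fun z : ℝ => z ^ (k + 1)) (((k : ℝ) + 1) * y ^ k) y := by
    simpa using hasDerivAt_pow (k + 1) y
  have h := ((hp.mul hL).div_const (Dk k)).mul_const ((w / 2) ^ k)
  refine h.congr_deriv ?_
  symm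
  unfold term1 gterm
  rw [pow_succ, mul_assoc (y ^ k) y y⁻¹, mul_inv_cancel₀ hy.ne', mul_one]
  ring

lemma hasDerivAt_term1 (w : ℝ) (k : ℕ) {y : ℝ} (hy : 0 < y) :
    HasDerivAt (fun z => term1 w z k) (term2 w y k) y := by
  have h1 := ((hasDerivAt_Lf_s w k hy.ne').const_mul ((k : ℝ) + 1)).add_const 1
  have hp : HasDerivAt (fun z : ℝ => z ^ k / Dk k) ((k : ℝ) * y ^ (k - 1) / Dk k) y :=
    (hasDerivAt_pow k y).div_const _
  have h := ((h1.mul hp).mul_const ((w / 2) ^ k)).mul_const (1 : ℝ)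
  refine h.congr_deriv ?_
  symm
  unfold term2 gterm
  have hD := (Dk_pos k).ne'
  rcases k with _ | n
  · field_simp
    ring
  · have hn : (n + 1 : ℕ) - 1 = n := rfl
    rw [hn]
    push_cast
    rw [pow_succ]
    field_simp
    ring

lemma hasDerivAt_stc (s : ℝ) (k : ℕ) {y : ℝ} (hy : 0 < y) :
    HasDerivAt (fun w => stc w s k) (termW y s k) y := by
  have h1 := ((hasDerivAt_Lf_w s k hy.ne').const_mul ((k : ℝ) * ((k : ℝ) + 1))).add_const
    (2 * (k : ℝ) + 1)
  have hdiv : HasDerivAt (fun w : ℝ => w / 2) ((1:ℝ) / 2) y := by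
    simpa using (hasDerivAt_id y).div_const 2
  have hp : HasDerivAt (fun w : ℝ => (w / 2) ^ k)
      ((k : ℝ) * (y / 2) ^ (k - 1) * (1 / 2)) y := hdiv.pow k
  have h := ((h1.mul_const (s ^ k / Dk k)).mul hp).mul_const (1 : ℝ)
  refine h.congr_deriv ?_
  symm
  unfold termW gterm
  have hD := (Dk_pos k).ne'
  rcases k with _ | n
  · simp
  · have hn : (n + 1 : ℕ) - 1 = n := rfl
    rw [hn]
    push_cast
    field_simp [pow_succ]
    ring

/- ## coefficient bounds -/

lemma coef1 : ∀ k : ℕ, |(k : ℝ) + 1| ≤ ((k : ℝ) + 2) ^ 3 := fun k => by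
  have hk : (0:ℝ) ≤ (k:ℝ) := Nat.cast_nonneg k
  rw [abs_of_nonneg (by linarith)]; nlinarith [pow_nonneg hk 3, sq_nonneg (k:ℝ), hk]

lemma coef1' : ∀ k : ℕ, |(1 : ℝ)| ≤ 3 * ((k : ℝ) + 2) ^ 3 := fun k => by
  have hk : (0:ℝ) ≤ (k:ℝ) := Nat.cast_nonneg k
  rw [abs_one]; nlinarith [pow_nonneg hk 3, sq_nonneg (k:ℝ), hk]

lemma coef0 : ∀ k : ℕ, |(1 : ℝ)| ≤ ((k : ℝ) + 2) ^ 3 := fun k => by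
  have hk : (0:ℝ) ≤ (k:ℝ) := Nat.cast_nonneg k
  rw [abs_one]; nlinarith [pow_nonneg hk 3, sq_nonneg (k:ℝ), hk]

lemma coef0' : ∀ k : ℕ, |(0 : ℝ)| ≤ 3 * ((k : ℝ) + 2) ^ 3 := fun k => by
  have hk : (0:ℝ) ≤ (k:ℝ) := Nat.cast_nonneg k
  rw [abs_zero]; nlinarith [pow_nonneg hk 3, sq_nonneg (k:ℝ), hk]

lemma coef2 : ∀ k : ℕ, |(k : ℝ) * ((k : ℝ) + 1)| ≤ ((k : ℝ) + 2) ^ 3 := fun k => by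
  have hk : (0:ℝ) ≤ (k:ℝ) := Nat.cast_nonneg k
  rw [abs_of_nonneg (by nlinarith)]; nlinarith [pow_nonneg hk 3, sq_nonneg (k:ℝ), hk]

lemma coef2' : ∀ k : ℕ, |2 * (k : ℝ) + 1| ≤ 3 * ((k : ℝ) + 2) ^ 3 := fun k => by
  have hk : (0:ℝ) ≤ (k:ℝ) := Nat.cast_nonneg k
  rw [abs_of_nonneg (by linarith)]; nlinarith [pow_nonneg hk 3, sq_nonneg (k:ℝ), hk]

lemma coefW : ∀ k : ℕ, |(k : ℝ) ^ 2 * ((k : ℝ) + 1)| ≤ ((k : ℝ) + 2) ^ 3 := fun k => by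
  have hk : (0:ℝ) ≤ (k:ℝ) := Nat.cast_nonneg k
  rw [abs_of_nonneg (by positivity)]; nlinarith [pow_nonneg hk 3, sq_nonneg (k:ℝ), hk]

lemma coefW' : ∀ k : ℕ,
    |(k : ℝ) * ((k : ℝ) + 1) + (k : ℝ) * (2 * (k : ℝ) + 1)| ≤ 3 * ((k : ℝ) + 2) ^ 3 := fun k => by
  have hk : (0:ℝ) ≤ (k:ℝ) := Nat.cast_nonneg k
  rw [abs_of_nonneg (by nlinarith)]; nlinarith [pow_nonneg hk 3, sq_nonneg (k:ℝ), hk]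

/- ## Termwise differentiation of the series -/

lemma stepA (w : ℝ) {s : ℝ} (hs : 0 < s) :
    HasDerivAt (fun y => ∑' k, y ^ (k + 1) * Lf w y k / Dk k * (w / 2) ^ k)
      (∑' k, term1 w s k) s := by
  have h2 : (0:ℝ) < s / 2 := by linarith
  set M := |Real.log (s / 2)| + |Real.log (2 * s)| + |Real.log w| with hMdef
  refine hasDerivAt_tsum_of_isPreconnected
    (u := fun k : ℕ => 1 * (M + (3 * |Real.eulerMascheroniConstant| + Real.log 2) + 6) *
      ((k : ℝ) + 2) ^ 4 * (2 * s * |w / 2|) ^ k / (Nat.factorial k : ℝ))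
    (t := Set.Ioo (s / 2) (2 * s)) (y₀ := s)
    (g' := fun (k : ℕ) (y : ℝ) => term1 w y k)
    (summable_u _ (by positivity)) isOpen_Ioo isPreconnected_Ioo
    (fun (k : ℕ) (y : ℝ) hy => hasDerivAt_term0 w k (h2.trans hy.1)) (fun (k : ℕ) (y : ℝ) hy => ?_)
    (Set.mem_Ioo.2 ⟨by linarith, by linarith⟩) ?_ (Set.mem_Ioo.2 ⟨by linarith, by linarith⟩)
  · rw [Real.norm_eq_abs]
    have hy0 : 0 < y := h2.trans hy.1
    have hylog : |Real.log y| ≤ |Real.log (s / 2)| + |Real.log (2 * s)| :=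
      abs_log_interval h2 hy.1.le hy.2.le
    have hys : |y| ≤ 2 * s := by rw [abs_of_pos hy0]; linarith [hy.2]
    have hM' : |Real.log y| + |Real.log w| ≤ M := by rw [hMdef]; linarith
    exact gterm_bound k (coef1 k) (coef1' k) hM' hys le_rfl (by rw [abs_one])
  · exact (summable_gterm coef0 coef0' w s s).congr fun k => by
      unfold gterm; rw [pow_succ]; ring

lemma stepB (w : ℝ) {s : ℝ} (hs : 0 < s) :
    HasDerivAt (fun y => ∑' k, term1 w y k) (∑' k, term2 w s k) s := by
  have h2 : (0:ℝ) < s / 2 := by linarith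
  set M := |Real.log (s / 2)| + |Real.log (2 * s)| + |Real.log w| with hMdef
  refine hasDerivAt_tsum_of_isPreconnected
    (u := fun k : ℕ => (s / 2)⁻¹ * (M + (3 * |Real.eulerMascheroniConstant| + Real.log 2) + 6) *
      ((k : ℝ) + 2) ^ 4 * (2 * s * |w / 2|) ^ k / (Nat.factorial k : ℝ))
    (t := Set.Ioo (s / 2) (2 * s)) (y₀ := s)
    (g' := fun (k : ℕ) (y : ℝ) => term2 w y k)
    (summable_u _ (by positivity)) isOpen_Ioo isPreconnected_Ioo
    (fun (k : ℕ) (y : ℝ) hy => hasDerivAt_term1 w k (h2.trans hy.1)) (fun (k : ℕ) (y : ℝ) hy => ?_)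
    (Set.mem_Ioo.2 ⟨by linarith, by linarith⟩) ?_ (Set.mem_Ioo.2 ⟨by linarith, by linarith⟩)
  · rw [Real.norm_eq_abs]
    have hy0 : 0 < y := h2.trans hy.1
    have hylog : |Real.log y| ≤ |Real.log (s / 2)| + |Real.log (2 * s)| :=
      abs_log_interval h2 hy.1.le hy.2.le
    have hys : |y| ≤ 2 * s := by rw [abs_of_pos hy0]; linarith [hy.2]
    have hM' : |Real.log y| + |Real.log w| ≤ M := by rw [hMdef]; linarith
    have hE : |y⁻¹| ≤ (s / 2)⁻¹ := by
      rw [abs_inv, abs_of_pos hy0]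
      exact inv_anti₀ h2 hy.1.le
    exact gterm_bound k (coef2 k) (coef2' k) hM' hys le_rfl hE
  · exact (summable_gterm coef1 coef1' w s 1).congr fun k => rfl

lemma stepC (s : ℝ) {ω : ℝ} (hω : 0 < ω) :
    HasDerivAt (fun w => ∑' k, stc w s k) (∑' k, termW ω s k) ω := by
  have h2 : (0:ℝ) < ω / 2 := by linarith
  set M := |Real.log s| + (|Real.log (ω / 2)| + |Real.log (2 * ω)|) with hMdef
  refine hasDerivAt_tsum_of_isPreconnected
    (u := fun k : ℕ => (ω / 2)⁻¹ * (M + (3 * |Real.eulerMascheroniConstant| + Real.log 2) + 6) *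
      ((k : ℝ) + 2) ^ 4 * (|s| * ω) ^ k / (Nat.factorial k : ℝ))
    (t := Set.Ioo (ω / 2) (2 * ω)) (y₀ := ω)
    (g' := fun (k : ℕ) (y : ℝ) => termW y s k)
    (summable_u _ (by positivity)) isOpen_Ioo isPreconnected_Ioo
    (fun (k : ℕ) (y : ℝ) hy => hasDerivAt_stc s k (h2.trans hy.1)) (fun (k : ℕ) (y : ℝ) hy => ?_)
    (Set.mem_Ioo.2 ⟨by linarith, by linarith⟩) ?_ (Set.mem_Ioo.2 ⟨by linarith, by linarith⟩)
  · rw [Real.norm_eq_abs]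
    have hy0 : 0 < y := h2.trans hy.1
    have hylog : |Real.log y| ≤ |Real.log (ω / 2)| + |Real.log (2 * ω)| :=
      abs_log_interval h2 hy.1.le hy.2.le
    have hM' : |Real.log s| + |Real.log y| ≤ M := by rw [hMdef]; linarith
    have hW : |y / 2| ≤ ω := by
      rw [abs_of_pos (by linarith)]; linarith [hy.2]
    have hE : |y⁻¹| ≤ (ω / 2)⁻¹ := by
      rw [abs_inv, abs_of_pos hy0]
      exact inv_anti₀ h2 hy.1.le
    exact gterm_bound k (coefW k) (coefW' k) hM' le_rfl hW hE
  · exact (summable_gterm coef2 coef2' ω s 1).congr fun k => rfl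

/- ## The key combinatorial identity -/

lemma key_identity (ω s : ℝ) (hω : 0 < ω) (k : ℕ) :
    2 * termW ω s (k + 1) = s ^ (k + 1) * Lf ω s k / Dk k * (ω / 2) ^ k := by
  have hL : Lf ω s (k + 1) = Lf ω s k - 2 / ((k:ℝ) + 1) - 1 / ((k:ℝ) + 2) := by
    simp only [Lf, harmonicNumber, Finset.sum_range_succ]
    push_cast
    ring
  have hD : Dk (k + 1) = Dk k * (((k:ℝ) + 1) ^ 2 * ((k:ℝ) + 2)) := by
    simp only [Dk, Nat.factorial_succ]
    push_cast
    ring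
  have h1 : ((k:ℝ) + 1) ≠ 0 := by positivity
  have h2 : ((k:ℝ) + 2) ≠ 0 := by positivity
  have hDk : Dk k ≠ 0 := (Dk_pos k).ne'
  have hω' : ω ≠ 0 := hω.ne'
  simp only [termW, gterm]
  rw [hL, hD]
  push_cast
  field_simp
  ring

/- ## Main theorem -/

/-- For `ω, s > 0`, the series `T` satisfies `2 ∂_ω (s ∂_s² T) = T`. -/
theorem Tfun_pde (ω s : ℝ) (hω : 0 < ω) (hs : 0 < s) :
    2 * deriv (fun w : ℝ => s * iteratedDeriv 2 (fun u : ℝ => Tfun w u) s) ω =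
      Tfun ω s := by
  have hTf : ∀ w : ℝ, (fun u : ℝ => Tfun w u) =
      (fun y => ∑' k, y ^ (k + 1) * Lf w y k / Dk k * (w / 2) ^ k) := fun w => rfl
  have hiter : ∀ w : ℝ, iteratedDeriv 2 (fun u : ℝ => Tfun w u) s = ∑' k, term2 w s k := by
    intro w
    rw [iteratedDeriv_succ, iteratedDeriv_one]
    have hd1 : deriv (fun u : ℝ => Tfun w u) =ᶠ[nhds s] (fun y => ∑' k, term1 w y k) := by
      filter_upwards [Ioi_mem_nhds hs] with y hy
      rw [hTf w]
      exact (stepA w hy).deriv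
    rw [hd1.deriv_eq]
    exact (stepB w hs).deriv
  have hfun : (fun w : ℝ => s * iteratedDeriv 2 (fun u : ℝ => Tfun w u) s) =
      (fun w => ∑' k, stc w s k) := by
    funext w
    rw [hiter w]
    have hterm : ∀ k, term2 w s k = stc w s k * s⁻¹ := fun k => by
      simp only [term2, stc, gterm]; ring
    rw [tsum_congr hterm, tsum_mul_right]
    field_simp
  rw [hfun, (stepC s hω).deriv]
  have hsummW : Summable (fun k => termW ω s k) :=
    (summable_gterm coefW coefW' ω s ω⁻¹).congr fun k => rfl
  rw [hsummW.tsum_eq_zero_add]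
  have h0 : termW ω s 0 = 0 := by
    simp only [termW, gterm]
    norm_num
  rw [h0, zero_add, ← tsum_mul_left]
  have hTfun : Tfun ω s = ∑' k, s ^ (k + 1) * Lf ω s k / Dk k * (ω / 2) ^ k := rfl
  rw [hTfun]
  exact tsum_congr fun k => key_identity ω s hω k
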